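/- arXiv:1911.01301 — 2 statements merged into one kernel-verified Lean document; each statement's English description precedes it below -/
import Mathlib

section
/- For all integers d ≥ 1, k ≥ 1 and all integers r, s_Y, s_Z with 0 ≤ r ≤ k, 0 ≤ s_Y ≤ k, 0 ≤ s_Z ≤ min(k−r, k−s_Y), setting s := s_Y + s_Z, one has ∫_{(B)^{3k−r−s}} h_1(y_0,…,y_{k−1}) · h_1(y_0,…,y_{r−1}, z_0,…,z_{k−r−1}) · h_1(y_0,…,y_{s_Y−1}, z_0,…,z_{s_Z−1}, w_0,…,w_{k−s−1}) dy dz dw ≤ ( (k+1)(k−r+1)(k−s+1) )^d, where B := [−1,1]^d ⊂ ℝ^d. -/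
open MeasureTheory

open Classical in
/-- The indicator of a proposition, as a real number. -/
noncomputable def ind (p : Prop) : ℝ := if p then 1 else 0

/-- All points of a set `P ⊆ ℝ^d` (with the sup norm) are pairwise within distance `δ`. -/
def closeP {d : ℕ} (δ : ℝ) (P : Set (Fin d → ℝ)) : Prop :=
  ∀ a ∈ P, ∀ b ∈ P, ‖a - b‖ ≤ δ

lemma ind_nonneg (p : Prop) : 0 ≤ ind p := by
  unfold ind; split <;> norm_num

lemma ind_le_one (p : Prop) : ind p ≤ 1 := by
  unfold ind; split <;> norm_num

lemma ind_true {p : Prop} (h : p) : ind p = 1 := by simp [ind, h]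

lemma ind_false {p : Prop} (h : ¬ p) : ind p = 0 := by simp [ind, h]

lemma ind_mono {p q : Prop} (h : p → q) : ind p ≤ ind q := by
  by_cases hp : p
  · simp [ind, hp, h hp]
  · rw [ind_false hp]; exact ind_nonneg q

lemma ind_congr {p q : Prop} (h : p ↔ q) : ind p = ind q := by
  unfold ind; by_cases hp : p
  · simp [hp, h.mp hp]
  · have hq : ¬ q := fun hq => hp (h.mpr hq)
    simp [hp, hq]

lemma ind_and (p q : Prop) : ind (p ∧ q) = ind p * ind q := by
  unfold ind; by_cases hp : p <;> by_cases hq : q <;> simp [hp, hq]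

lemma ind_forall {ι : Type*} [Fintype ι] (P : ι → Prop) :
    ind (∀ i, P i) = ∏ i, ind (P i) := by
  by_cases h : ∀ i, P i
  · rw [ind_true h, Finset.prod_eq_one fun i _ => ind_true (h i)]
  · push_neg at h
    obtain ⟨i, hi⟩ := h
    rw [ind_false (fun hall => hi (hall i)), Finset.prod_eq_zero (Finset.mem_univ i) (ind_false hi)]

lemma ind_eq_indicator {α : Type*} (S : Set α) (x : α) :
    ind (x ∈ S) = S.indicator (fun _ => (1:ℝ)) x := by
  by_cases h : x ∈ S <;> simp [ind, h]

lemma indicator_eq_ind_mul {α : Type*} (S : Set α) (f : α → ℝ) (x : α) :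
    S.indicator f x = ind (x ∈ S) * f x := by
  by_cases h : x ∈ S <;> simp [ind, h]

lemma measurable_ind {α : Type*} [MeasurableSpace α] {P : α → Prop}
    (h : MeasurableSet {x | P x}) : Measurable fun x => ind (P x) := by
  have : (fun x => ind (P x)) = Set.indicator {x | P x} (fun _ => (1:ℝ)) := by
    funext x; exact ind_eq_indicator {x | P x} x
  rw [this]
  exact (measurable_const).indicator h

lemma integral_ind_mem {α : Type*} [MeasureSpace α] {S : Set α} (hS : MeasurableSet S) :
    ∫ x, ind (x ∈ S) = (volume S).toReal := by
  simp_rw [ind_eq_indicator S]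
  rw [integral_indicator_const (1:ℝ) hS]
  simp
  rfl

lemma integrable_ind {α : Type*} [MeasureSpace α] {P : α → Prop}
    (h : MeasurableSet {x | P x}) (hfin : volume {x | P x} < ⊤) :
    Integrable (fun x => ind (P x)) := by
  have : (fun x => ind (P x)) = Set.indicator {x | P x} (fun _ => (1:ℝ)) := by
    funext x; exact ind_eq_indicator {x | P x} x
  rw [this, integrable_indicator_iff h]
  exact integrableOn_const hfin.ne

lemma vol_box_lt_top {ι : Type*} [Fintype ι] (a b : ℝ) :
    volume (Set.univ.pi fun _ : ι => Set.Icc a b) < ⊤ := by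
  rw [volume_pi_pi]
  exact ENNReal.prod_lt_top fun i _ => by simp [Real.volume_Icc]

lemma integral_box (n : ℕ) (a b : ℝ) (hab : a ≤ b) :
    (∫ x : Fin n → ℝ, ind (∀ i, x i ∈ Set.Icc a b)) = (b - a) ^ n := by
  have h1 : ∀ x : Fin n → ℝ, ind (∀ i, x i ∈ Set.Icc a b)
      = ind (x ∈ Set.univ.pi fun _ : Fin n => Set.Icc a b) := by
    intro x; exact ind_congr (by simp [Set.mem_pi, Pi.le_def, forall_and])
  simp_rw [h1]
  rw [integral_ind_mem (MeasurableSet.univ_pi fun _ => measurableSet_Icc), volume_pi_pi]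
  simp [Real.volume_Icc, ENNReal.toReal_ofReal (by linarith : (0:ℝ) ≤ b - a),
    Finset.prod_const, ENNReal.toReal_pow]

noncomputable def qfun (m : ℕ) : (Fin m → ℝ) → ℝ := fun x =>
  ind ((∀ i, x i ∈ Set.Icc (-1:ℝ) 1) ∧ ∀ i j, |x i - x j| ≤ 1)

lemma isClosed_qset (m : ℕ) :
    IsClosed {x : Fin m → ℝ | (∀ i, x i ∈ Set.Icc (-1:ℝ) 1) ∧ ∀ i j, |x i - x j| ≤ 1} := by
  have h1 : IsClosed {x : Fin m → ℝ | ∀ i, x i ∈ Set.Icc (-1:ℝ) 1} := by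
    have : {x : Fin m → ℝ | ∀ i, x i ∈ Set.Icc (-1:ℝ) 1}
        = ⋂ i, (fun x : Fin m → ℝ => x i) ⁻¹' Set.Icc (-1:ℝ) 1 := by ext x; simp
    rw [this]
    exact isClosed_iInter fun i => isClosed_Icc.preimage (continuous_apply i)
  have h2 : IsClosed {x : Fin m → ℝ | ∀ i j, |x i - x j| ≤ 1} := by
    have : {x : Fin m → ℝ | ∀ i j, |x i - x j| ≤ 1}
        = ⋂ i, ⋂ j, {x : Fin m → ℝ | |x i - x j| ≤ 1} := by ext x; simp
    rw [this]
    refine isClosed_iInter fun i => isClosed_iInter fun j => ?_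
    exact isClosed_le (((continuous_apply i).sub (continuous_apply j)).abs) continuous_const
  have : {x : Fin m → ℝ | (∀ i, x i ∈ Set.Icc (-1:ℝ) 1) ∧ ∀ i j, |x i - x j| ≤ 1}
      = {x : Fin m → ℝ | ∀ i, x i ∈ Set.Icc (-1:ℝ) 1} ∩ {x | ∀ i j, |x i - x j| ≤ 1} := rfl
  rw [this]; exact h1.inter h2

lemma integrable_qfun (m : ℕ) : Integrable (qfun m) := by
  refine integrable_ind (isClosed_qset m).measurableSet ?_
  refine lt_of_le_of_lt (measure_mono ?_) (vol_box_lt_top (-1 : ℝ) 1)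
  intro x hx
  simp only [Set.mem_pi, Set.mem_univ, forall_true_left]
  exact fun i => hx.1 i

lemma isClosed_vset (n : ℕ) (j : Fin (n+1)) :
    IsClosed {x : Fin (n+1) → ℝ | x j ∈ Set.Icc (-1:ℝ) 0 ∧
      ∀ i, x i ∈ Set.Icc (x j) (x j + 1)} := by
  have h1 : IsClosed {x : Fin (n+1) → ℝ | x j ∈ Set.Icc (-1:ℝ) 0} :=
    isClosed_Icc.preimage (continuous_apply j)
  have h2 : IsClosed {x : Fin (n+1) → ℝ | ∀ i, x i ∈ Set.Icc (x j) (x j + 1)} := by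
    have : {x : Fin (n+1) → ℝ | ∀ i, x i ∈ Set.Icc (x j) (x j + 1)}
        = ⋂ i, ({x : Fin (n+1) → ℝ | x j ≤ x i} ∩ {x | x i ≤ x j + 1}) := by
      ext x; simp [Set.mem_Icc, forall_and, Set.mem_iInter]
    rw [this]
    refine isClosed_iInter fun i => IsClosed.inter ?_ ?_
    · exact isClosed_le (continuous_apply j) (continuous_apply i)
    · exact isClosed_le (continuous_apply i) ((continuous_apply j).add continuous_const)
  exact h1.inter h2

lemma vset_subset (n : ℕ) (j : Fin (n+1)) :
    {x : Fin (n+1) → ℝ | x j ∈ Set.Icc (-1:ℝ) 0 ∧ ∀ i, x i ∈ Set.Icc (x j) (x j + 1)}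
      ⊆ Set.univ.pi fun _ : Fin (n+1) => Set.Icc (-1:ℝ) 1 := by
  rintro x ⟨hj, hall⟩ i -
  obtain ⟨hji, hij⟩ := hall i
  exact ⟨le_trans hj.1 hji, le_trans hij (by linarith [hj.2])⟩

lemma integrable_vfun (n : ℕ) (j : Fin (n+1)) :
    Integrable (fun x : Fin (n+1) → ℝ =>
      ind (x j ∈ Set.Icc (-1:ℝ) 0 ∧ ∀ i, x i ∈ Set.Icc (x j) (x j + 1))) := by
  refine integrable_ind (isClosed_vset n j).measurableSet ?_
  exact lt_of_le_of_lt (measure_mono (vset_subset n j)) (vol_box_lt_top (-1:ℝ) 1)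

lemma integral_vfun (n : ℕ) (j : Fin (n+1)) :
    (∫ x : Fin (n+1) → ℝ,
      ind (x j ∈ Set.Icc (-1:ℝ) 0 ∧ ∀ i, x i ∈ Set.Icc (x j) (x j + 1))) = 1 := by
  set f : (Fin (n+1) → ℝ) → ℝ := fun x =>
    ind (x j ∈ Set.Icc (-1:ℝ) 0 ∧ ∀ i, x i ∈ Set.Icc (x j) (x j + 1)) with hf
  have mp := (measurePreserving_piFinSuccAbove (fun _ : Fin (n+1) => (volume : Measure ℝ)) j).symm
  have key : (∫ x : Fin (n+1) → ℝ, f x)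
      = ∫ z : ℝ × (Fin n → ℝ),
          f ((MeasurableEquiv.piFinSuccAbove (fun _ : Fin (n+1) => ℝ) j).symm z) := by
    rw [show (volume : Measure (Fin (n+1) → ℝ)) = Measure.pi fun _ => volume from volume_pi]
    rw [← mp.integral_comp']
    rfl
  rw [key]
  have hfz : ∀ z : ℝ × (Fin n → ℝ),
      f ((MeasurableEquiv.piFinSuccAbove (fun _ : Fin (n+1) => ℝ) j).symm z)
      = ind (z.1 ∈ Set.Icc (-1:ℝ) 0 ∧ ∀ i, z.2 i ∈ Set.Icc z.1 (z.1 + 1)) := by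
    rintro ⟨t, y⟩
    simp only [hf, MeasurableEquiv.piFinSuccAbove_symm_apply]
    refine ind_congr ?_
    simp only [Fin.insertNthEquiv_apply, Fin.insertNth_apply_same]
    rw [Fin.forall_iff_succAbove j]
    simp only [Fin.insertNth_apply_same, Fin.insertNth_apply_succAbove]
    constructor
    · rintro ⟨h1, _, h2⟩; exact ⟨h1, h2⟩
    · rintro ⟨h1, h2⟩
      exact ⟨h1, Set.mem_Icc.mpr ⟨le_refl _, by linarith⟩, h2⟩
  simp_rw [hfz]
  have hint : Integrable (fun z : ℝ × (Fin n → ℝ) =>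
      ind (z.1 ∈ Set.Icc (-1:ℝ) 0 ∧ ∀ i, z.2 i ∈ Set.Icc z.1 (z.1 + 1))) := by
    refine integrable_ind ?_ ?_
    · have : {z : ℝ × (Fin n → ℝ) | z.1 ∈ Set.Icc (-1:ℝ) 0 ∧ ∀ i, z.2 i ∈ Set.Icc z.1 (z.1 + 1)}
          = (Prod.fst ⁻¹' Set.Icc (-1:ℝ) 0) ∩
            ⋂ i, ({z : ℝ × (Fin n → ℝ) | z.1 ≤ z.2 i} ∩ {z | z.2 i ≤ z.1 + 1}) := by
        ext z; simp [Set.mem_Icc, forall_and, Set.mem_iInter]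
      rw [this]
      refine MeasurableSet.inter (measurableSet_Icc.preimage measurable_fst) ?_
      refine MeasurableSet.iInter fun i => MeasurableSet.inter ?_ ?_
      · exact (isClosed_le (by fun_prop : Continuous fun z : ℝ × (Fin n → ℝ) => z.1)
          (by fun_prop : Continuous fun z : ℝ × (Fin n → ℝ) => z.2 i)).measurableSet
      · exact (isClosed_le (by fun_prop : Continuous fun z : ℝ × (Fin n → ℝ) => z.2 i)
          (by fun_prop : Continuous fun z : ℝ × (Fin n → ℝ) => z.1 + 1)).measurableSet
    · refine lt_of_le_of_lt (measure_mono ?_)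
        (?_ : volume ((Set.Icc (-1:ℝ) 0) ×ˢ (Set.univ.pi fun _ : Fin n => Set.Icc (-2:ℝ) 1)) < ⊤)
      · rintro ⟨t, y⟩ ⟨h1, h2⟩
        refine ⟨h1, fun i _ => ?_⟩
        obtain ⟨ha, hb⟩ := h2 i
        constructor <;> [linarith [h1.1]; linarith [h1.2]]
      · rw [show (volume : Measure (ℝ × (Fin n → ℝ))) = (volume : Measure ℝ).prod volume from rfl]
        rw [Measure.prod_prod]
        exact ENNReal.mul_lt_top (by simp [Real.volume_Icc]) (vol_box_lt_top (-2:ℝ) 1)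
  rw [show (volume : Measure (ℝ × (Fin n → ℝ))) = (volume : Measure ℝ).prod volume from rfl]
  rw [MeasureTheory.integral_prod _ (by
    rw [show ((volume : Measure ℝ).prod volume) = (volume : Measure (ℝ × (Fin n → ℝ))) from rfl]
    exact hint)]
  have inner : ∀ t : ℝ, (∫ y : Fin n → ℝ,
      ind ((t, y).1 ∈ Set.Icc (-1:ℝ) 0 ∧ ∀ i, (t, y).2 i ∈ Set.Icc (t,y).1 ((t,y).1 + 1)))
      = ind (t ∈ Set.Icc (-1:ℝ) 0) := by
    intro t
    simp only
    have : ∀ y : Fin n → ℝ, ind (t ∈ Set.Icc (-1:ℝ) 0 ∧ ∀ i, y i ∈ Set.Icc t (t + 1))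
        = ind (t ∈ Set.Icc (-1:ℝ) 0) * ind (∀ i, y i ∈ Set.Icc t (t + 1)) := fun y => ind_and _ _
    simp_rw [this]
    rw [integral_const_mul, integral_box n t (t+1) (by linarith)]
    simp
  simp_rw [inner]
  rw [integral_ind_mem measurableSet_Icc]
  simp [Real.volume_Icc]

lemma integrable_ufun (m : ℕ) :
    Integrable (fun x : Fin m → ℝ => ind (∀ i, x i ∈ Set.Icc (0:ℝ) 1)) := by
  refine integrable_ind ?_ ?_
  · have : {x : Fin m → ℝ | ∀ i, x i ∈ Set.Icc (0:ℝ) 1}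
        = Set.univ.pi fun _ : Fin m => Set.Icc (0:ℝ) 1 := by
      ext x; simp [Set.mem_pi, Pi.le_def, forall_and]
    rw [this]
    exact MeasurableSet.univ_pi fun _ => measurableSet_Icc
  · refine lt_of_le_of_lt (measure_mono ?_) (vol_box_lt_top (0:ℝ) 1)
    intro x hx
    simp only [Set.mem_pi, Set.mem_univ, forall_true_left]
    exact fun i => hx i

lemma oneD (m : ℕ) : (∫ x : Fin m → ℝ, qfun m x) ≤ (m : ℝ) + 1 := by
  cases m with
  | zero =>
    have : ∀ x : Fin 0 → ℝ, qfun 0 x = 1 := by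
      intro x
      exact ind_true ⟨fun i => i.elim0, fun i => i.elim0⟩
    simp_rw [this]
    simp [volume_pi, integral_const, Measure.real, Measure.pi_univ]
  | succ n =>
    set u : (Fin (n+1) → ℝ) → ℝ := fun x => ind (∀ i, x i ∈ Set.Icc (0:ℝ) 1) with hu
    set v : Fin (n+1) → (Fin (n+1) → ℝ) → ℝ := fun j x =>
      ind (x j ∈ Set.Icc (-1:ℝ) 0 ∧ ∀ i, x i ∈ Set.Icc (x j) (x j + 1)) with hv
    have hpt : ∀ x : Fin (n+1) → ℝ, qfun (n+1) x ≤ u x + ∑ j, v j x := by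
      intro x
      by_cases h : (∀ i, x i ∈ Set.Icc (-1:ℝ) 1) ∧ ∀ i j, |x i - x j| ≤ 1
      · obtain ⟨j, -, hj⟩ := Finset.exists_min_image Finset.univ x Finset.univ_nonempty
        have hq1 : qfun (n+1) x = 1 := ind_true h
        by_cases h0 : 0 ≤ x j
        · have hu1 : u x = 1 := ind_true fun i =>
            ⟨le_trans h0 (hj i (Finset.mem_univ i)), (h.1 i).2⟩
          rw [hq1, hu1]
          have : (0:ℝ) ≤ ∑ j, v j x :=
            Finset.sum_nonneg fun j _ => ind_nonneg _
          linarith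
        · have hv1 : v j x = 1 := ind_true ⟨⟨(h.1 j).1, le_of_not_ge h0⟩,
            fun i => ⟨hj i (Finset.mem_univ i), by
              have := (abs_le.mp (h.2 i j)).2; linarith⟩⟩
          rw [hq1]
          have h1 : v j x ≤ ∑ j', v j' x :=
            Finset.single_le_sum (f := fun j' => v j' x) (fun j' _ => ind_nonneg _)
              (Finset.mem_univ j)
          have h2 : (0:ℝ) ≤ u x := ind_nonneg _
          linarith [hv1 ▸ h1]
      · rw [show qfun (n+1) x = 0 from ind_false h]
        exact add_nonneg (ind_nonneg _) (Finset.sum_nonneg fun j _ => ind_nonneg _)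
    have hvint : ∀ j : Fin (n+1), Integrable (v j) := fun j => integrable_vfun n j
    have hsint : Integrable (fun x => ∑ j, v j x) :=
      integrable_finset_sum Finset.univ fun j _ => hvint j
    have huint := integrable_ufun (n+1)
    calc (∫ x : Fin (n+1) → ℝ, qfun (n+1) x)
        ≤ ∫ x : Fin (n+1) → ℝ, (u x + ∑ j, v j x) :=
          integral_mono (integrable_qfun (n+1)) (huint.add hsint) hpt
      _ = (∫ x : Fin (n+1) → ℝ, u x) + ∫ x : Fin (n+1) → ℝ, ∑ j, v j x :=
          integral_add huint hsint
      _ = (∫ x : Fin (n+1) → ℝ, u x) + ∑ j, ∫ x : Fin (n+1) → ℝ, v j x :=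
          by rw [integral_finset_sum Finset.univ fun j _ => hvint j]
      _ = 1 + ∑ j : Fin (n+1), (1:ℝ) := by
          rw [show (∫ x : Fin (n+1) → ℝ, u x) = 1 by
            simpa [hu] using integral_box (n+1) 0 1 zero_le_one]
          congr 1
          exact Finset.sum_congr rfl fun j _ => integral_vfun n j
      _ = ((n+1 : ℕ) : ℝ) + 1 := by
          simp [Finset.sum_const]
          push_cast
          ring

noncomputable def swapE (m d : ℕ) : (Fin m → Fin d → ℝ) ≃ᵐ (Fin d → Fin m → ℝ) where
  toEquiv := Equiv.piComm fun _ _ => ℝ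
  measurable_toFun := measurable_pi_lambda _ fun c => measurable_pi_lambda _ fun i =>
    (measurable_pi_apply c).comp (measurable_pi_apply i)
  measurable_invFun := measurable_pi_lambda _ fun i => measurable_pi_lambda _ fun c =>
    (measurable_pi_apply i).comp (measurable_pi_apply c)

lemma swapE_apply (m d : ℕ) (y : Fin m → Fin d → ℝ) (c : Fin d) (i : Fin m) :
    swapE m d y c i = y i c := rfl

lemma mp_swap (m d : ℕ) : MeasurePreserving (swapE m d) volume volume := by
  refine ⟨(swapE m d).measurable, ?_⟩
  rw [show (volume : Measure (Fin d → Fin m → ℝ)) = Measure.pi fun _ => volume from volume_pi]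
  refine (Measure.pi_eq_generateFrom (fun _ => generateFrom_pi) (fun _ => isPiSystem_pi)
    (fun _ => ?_) ?_).symm
  · exact Measure.FiniteSpanningSetsIn.pi fun _ => (volume : Measure ℝ).toFiniteSpanningSetsIn
  · intro s hs
    have : ∀ c : Fin d, ∃ A : Fin m → Set ℝ,
        (∀ i, MeasurableSet (A i)) ∧ Set.univ.pi A = s c := by
      intro c
      obtain ⟨A, hA, hAs⟩ := hs c
      exact ⟨A, fun i => hA i (Set.mem_univ i), hAs⟩
    choose A hA hAs using this
    have hsm : ∀ c, MeasurableSet (s c) := fun c =>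
      (hAs c) ▸ (MeasurableSet.univ_pi fun i => hA c i)
    rw [Measure.map_apply (swapE m d).measurable (MeasurableSet.univ_pi hsm)]
    have hpre : (swapE m d) ⁻¹' (Set.univ.pi s)
        = Set.univ.pi fun i : Fin m => Set.univ.pi fun c : Fin d => A c i := by
      ext y
      simp only [Set.mem_preimage, Set.mem_pi, Set.mem_univ, forall_true_left]
      constructor
      · intro h i c
        have := h c
        rw [← hAs c] at this
        exact this i (Set.mem_univ i)
      · intro h c
        rw [← hAs c]
        intro i _
        exact h i c
    rw [hpre, volume_pi_pi]
    have : ∀ i : Fin m, volume (Set.univ.pi fun c : Fin d => A c i) = ∏ c, volume (A c i) :=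
      fun i => volume_pi_pi _
    simp_rw [this]
    rw [Finset.prod_comm]
    refine Finset.prod_congr rfl fun c _ => ?_
    rw [← hAs c, volume_pi_pi]

lemma measurable_ind_closeP {d m : ℕ} :
    Measurable fun y : Fin m → (Fin d → ℝ) => ind (closeP 1 (Set.range y)) := by
  apply measurable_ind
  have : {y : Fin m → (Fin d → ℝ) | closeP 1 (Set.range y)}
      = ⋂ i, ⋂ j, {y : Fin m → (Fin d → ℝ) | ‖y i - y j‖ ≤ 1} := by
    ext y; simp [closeP]
  rw [this]
  refine MeasurableSet.iInter fun i => MeasurableSet.iInter fun j => ?_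
  exact (isClosed_le (((continuous_apply i).sub (continuous_apply j)).norm)
    continuous_const).measurableSet

lemma group_bound (d m : ℕ) :
    (∫ y in (Set.univ.pi fun _ : Fin m => Set.univ.pi fun _ : Fin d => Set.Icc (-1:ℝ) 1),
      ind (closeP 1 (Set.range y))) ≤ ((m : ℝ) + 1) ^ d := by
  set T := Set.univ.pi fun _ : Fin m => Set.univ.pi fun _ : Fin d => Set.Icc (-1:ℝ) 1 with hT
  have hTm : MeasurableSet T :=
    MeasurableSet.univ_pi fun _ => MeasurableSet.univ_pi fun _ => measurableSet_Icc
  rw [← integral_indicator hTm]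
  have key : ∀ y : Fin m → Fin d → ℝ,
      T.indicator (fun y => ind (closeP 1 (Set.range y))) y
      = ∏ c : Fin d, qfun m (fun i => y i c) := by
    intro y
    rw [indicator_eq_ind_mul, ← ind_and]
    have hiff : (y ∈ T ∧ closeP 1 (Set.range y)) ↔
        ∀ c : Fin d, ((∀ i, y i c ∈ Set.Icc (-1:ℝ) 1) ∧ ∀ i j, |y i c - y j c| ≤ 1) := by
      have hmem : y ∈ T ↔ ∀ i c, y i c ∈ Set.Icc (-1:ℝ) 1 := by
        simp [hT, Set.mem_pi, Pi.le_def, forall_and]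
      have hcl : closeP 1 (Set.range y) ↔ ∀ i j, ∀ c, |y i c - y j c| ≤ 1 := by
        constructor
        · intro h i j c
          have := h (y i) (Set.mem_range_self i) (y j) (Set.mem_range_self j)
          have h2 := (pi_norm_le_iff_of_nonneg zero_le_one).mp this c
          simpa [Real.norm_eq_abs] using h2
        · rintro h a ⟨i, rfl⟩ b ⟨j, rfl⟩
          refine (pi_norm_le_iff_of_nonneg zero_le_one).mpr fun c => ?_
          simpa [Real.norm_eq_abs] using h i j c
      rw [hmem, hcl]
      constructor
      · rintro ⟨h1, h2⟩ c
        exact ⟨fun i => h1 i c, fun i j => h2 i j c⟩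
      · intro h
        exact ⟨fun i c => (h c).1 i, fun i j c => (h c).2 i j⟩
    rw [ind_congr hiff, ind_forall]
    rfl
  simp_rw [key]
  have hswap : (∫ y : Fin m → Fin d → ℝ, ∏ c : Fin d, qfun m (fun i => y i c))
      = ∫ x : Fin d → (Fin m → ℝ), ∏ c : Fin d, qfun m (x c) := by
    rw [← (mp_swap m d).integral_comp' (fun x => ∏ c : Fin d, qfun m (x c))]
    rfl
  rw [hswap, MeasureTheory.integral_fintype_prod_volume_eq_pow (ι := Fin d) (qfun m), Fintype.card_fin]
  exact pow_le_pow_left₀ (integral_nonneg fun x => ind_nonneg _) (oneD m) d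

lemma closeP_anti {d : ℕ} {δ : ℝ} {P Q : Set (Fin d → ℝ)} (hPQ : P ⊆ Q) :
    closeP δ Q → closeP δ P := fun H a ha b hb => H a (hPQ ha) b (hPQ hb)

lemma vol_box2_lt_top (m d : ℕ) :
    volume (Set.univ.pi fun _ : Fin m => Set.univ.pi fun _ : Fin d => Set.Icc (-1:ℝ) 1) < ⊤ := by
  rw [volume_pi_pi]
  exact ENNReal.prod_lt_top fun _ _ => vol_box_lt_top (-1:ℝ) 1

/-- For all integers `d ≥ 1`, `k ≥ 1`, `0 ≤ r ≤ k`, `0 ≤ s_Y ≤ k`,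
`0 ≤ s_Z ≤ min(k−r, k−s_Y)`, with `s := s_Y + s_Z`,
`∫_{(B)^{3k−r−s}} h_1(y) · h_1(y_{<r}, z) · h_1(y_{<s_Y}, z_{<s_Z}, w) dy dz dw
  ≤ ((k+1)(k−r+1)(k−s+1))^d`, where `B = [−1,1]^d ⊂ ℝ^d` with the `ℓ^∞` norm. -/
theorem stmt11 (d k r sY sZ : ℕ) (hd : 1 ≤ d) (hk : 1 ≤ k)
    (hr : r ≤ k) (hsY : sY ≤ k) (hsZ : sZ ≤ min (k - r) (k - sY)) :
    (∫ p in ((Set.univ.pi fun _ : Fin k =>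
                (Set.univ.pi fun _ : Fin d => Set.Icc (-1 : ℝ) 1)) ×ˢ
             ((Set.univ.pi fun _ : Fin (k - r) =>
                (Set.univ.pi fun _ : Fin d => Set.Icc (-1 : ℝ) 1)) ×ˢ
              (Set.univ.pi fun _ : Fin (k - (sY + sZ)) =>
                (Set.univ.pi fun _ : Fin d => Set.Icc (-1 : ℝ) 1)))),
      ind (closeP 1 (Set.range p.1)) *
      ind (closeP 1 ((p.1 '' {i : Fin k | (i : ℕ) < r}) ∪ Set.range p.2.1)) *
      ind (closeP 1 ((p.1 '' {i : Fin k | (i : ℕ) < sY}) ∪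
                     (p.2.1 '' {i : Fin (k - r) | (i : ℕ) < sZ}) ∪ Set.range p.2.2)))
      ≤ (((k : ℝ) + 1) * ((k : ℝ) - (r : ℝ) + 1) *
          ((k : ℝ) - ((sY : ℝ) + (sZ : ℝ)) + 1)) ^ d := by
  have hk' : sY + sZ ≤ k := by
    have := le_trans hsZ (min_le_right (k - r) (k - sY)); omega
  set m2 := k - r with hm2
  set m3 := k - (sY + sZ) with hm3
  set A : Set (Fin k → Fin d → ℝ) :=
    Set.univ.pi fun _ => Set.univ.pi fun _ => Set.Icc (-1:ℝ) 1 with hA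
  set B : Set (Fin m2 → Fin d → ℝ) :=
    Set.univ.pi fun _ => Set.univ.pi fun _ => Set.Icc (-1:ℝ) 1 with hB
  set C : Set (Fin m3 → Fin d → ℝ) :=
    Set.univ.pi fun _ => Set.univ.pi fun _ => Set.Icc (-1:ℝ) 1 with hC
  set f : (Fin k → Fin d → ℝ) → ℝ := fun y => ind (closeP 1 (Set.range y)) with hff
  set g : (Fin m2 → Fin d → ℝ) → ℝ := fun z => ind (closeP 1 (Set.range z)) with hgg
  set h : (Fin m3 → Fin d → ℝ) → ℝ := fun w => ind (closeP 1 (Set.range w)) with hhh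
  have hSfin : volume (A ×ˢ (B ×ˢ C)) < ⊤ := by
    rw [Measure.volume_eq_prod, Measure.prod_prod, Measure.volume_eq_prod, Measure.prod_prod]
    exact ENNReal.mul_lt_top (vol_box2_lt_top k d)
      (ENNReal.mul_lt_top (vol_box2_lt_top m2 d) (vol_box2_lt_top m3 d))
  have step1 : (∫ p in (A ×ˢ (B ×ˢ C)),
      ind (closeP 1 (Set.range p.1)) *
      ind (closeP 1 ((p.1 '' {i : Fin k | (i : ℕ) < r}) ∪ Set.range p.2.1)) *
      ind (closeP 1 ((p.1 '' {i : Fin k | (i : ℕ) < sY}) ∪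
                     (p.2.1 '' {i : Fin m2 | (i : ℕ) < sZ}) ∪ Set.range p.2.2)))
      ≤ ∫ p in (A ×ˢ (B ×ˢ C)), f p.1 * (g p.2.1 * h p.2.2) := by
    refine integral_mono_of_nonneg (ae_of_all _ fun p => ?_) ?_ (ae_of_all _ fun p => ?_)
    · exact mul_nonneg (mul_nonneg (ind_nonneg _) (ind_nonneg _)) (ind_nonneg _)
    · refine Integrable.mono' (g := fun _ => (1:ℝ))
        (integrableOn_const hSfin.ne) ?_ (ae_of_all _ fun p => ?_)
      · exact ((measurable_ind_closeP.comp measurable_fst).mul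
          ((measurable_ind_closeP.comp (measurable_fst.comp measurable_snd)).mul
           (measurable_ind_closeP.comp (measurable_snd.comp measurable_snd)))).aestronglyMeasurable
      · rw [Real.norm_eq_abs, abs_of_nonneg (mul_nonneg (ind_nonneg _)
          (mul_nonneg (ind_nonneg _) (ind_nonneg _)))]
        exact mul_le_one₀ (ind_le_one _) (mul_nonneg (ind_nonneg _) (ind_nonneg _))
          (mul_le_one₀ (ind_le_one _) (ind_nonneg _) (ind_le_one _))
    · have h2 : ind (closeP 1 ((p.1 '' {i : Fin k | (i : ℕ) < r}) ∪ Set.range p.2.1))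
          ≤ g p.2.1 := ind_mono (closeP_anti Set.subset_union_right)
      have h3 : ind (closeP 1 ((p.1 '' {i : Fin k | (i : ℕ) < sY}) ∪
          (p.2.1 '' {i : Fin m2 | (i : ℕ) < sZ}) ∪ Set.range p.2.2))
          ≤ h p.2.2 := ind_mono (closeP_anti Set.subset_union_right)
      calc ind (closeP 1 (Set.range p.1)) *
          ind (closeP 1 ((p.1 '' {i : Fin k | (i : ℕ) < r}) ∪ Set.range p.2.1)) *
          ind (closeP 1 ((p.1 '' {i : Fin k | (i : ℕ) < sY}) ∪
                     (p.2.1 '' {i : Fin m2 | (i : ℕ) < sZ}) ∪ Set.range p.2.2))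
          ≤ f p.1 * g p.2.1 *
            ind (closeP 1 ((p.1 '' {i : Fin k | (i : ℕ) < sY}) ∪
                     (p.2.1 '' {i : Fin m2 | (i : ℕ) < sZ}) ∪ Set.range p.2.2)) := by
            exact mul_le_mul_of_nonneg_right
              (mul_le_mul_of_nonneg_left h2 (ind_nonneg _)) (ind_nonneg _)
        _ ≤ f p.1 * g p.2.1 * h p.2.2 :=
            mul_le_mul_of_nonneg_left h3 (mul_nonneg (ind_nonneg _) (ind_nonneg _))
        _ = f p.1 * (g p.2.1 * h p.2.2) := mul_assoc _ _ _
  have step2 : (∫ p in (A ×ˢ (B ×ˢ C)), f p.1 * (g p.2.1 * h p.2.2))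
      = (∫ y in A, f y) * ((∫ z in B, g z) * (∫ w in C, h w)) := by
    rw [Measure.volume_eq_prod]
    rw [setIntegral_prod_mul f (fun z => g z.1 * h z.2) A (B ×ˢ C)]
    rw [Measure.volume_eq_prod, setIntegral_prod_mul g h B C]
  have hInonneg : ∀ {ι : Type} [Fintype ι] (S : Set (ι → Fin d → ℝ))
      (hS : MeasurableSet S), (0:ℝ) ≤ ∫ y in S, ind (closeP 1 (Set.range y)) := by
    intro ι _ S hS
    exact setIntegral_nonneg hS fun y _ => ind_nonneg _
  have hmeasbox : ∀ (m : ℕ), MeasurableSet (Set.univ.pi fun _ : Fin m =>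
      Set.univ.pi fun _ : Fin d => Set.Icc (-1:ℝ) 1) := fun m =>
    MeasurableSet.univ_pi fun _ => MeasurableSet.univ_pi fun _ => measurableSet_Icc
  have bA := group_bound d k
  have bB := group_bound d m2
  have bC := group_bound d m3
  have nA := hInonneg A (hmeasbox k)
  have nB := hInonneg B (hmeasbox m2)
  have nC := hInonneg C (hmeasbox m3)
  have powpos : ∀ m : ℕ, (0:ℝ) ≤ ((m:ℝ) + 1) ^ d := fun m =>
    pow_nonneg (by positivity) d
  have final : (∫ y in A, f y) * ((∫ z in B, g z) * (∫ w in C, h w))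
      ≤ ((k:ℝ) + 1) ^ d * ((((m2:ℝ) + 1) ^ d) * (((m3:ℝ) + 1) ^ d)) := by
    refine mul_le_mul bA ?_ (mul_nonneg nB nC) (powpos k)
    exact mul_le_mul bB bC nC (powpos m2)
  refine le_trans (le_trans step1 (step2 ▸ final)) (le_of_eq ?_)
  rw [← mul_pow, ← mul_pow]
  congr 1
  rw [hm2, hm3, Nat.cast_sub hr, Nat.cast_sub hk', Nat.cast_add]
  ring
end

section
/- For every integer k ≥ 1 the function g_k is convex on [0,∞), and satisfies g_k(1) = 1 and g_k(k+1) = 1; consequently g_k(r) ≤ 1 for every real r ∈ [1, k+1]. -/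
open Real Set

/-- Transfer convexity along equality on the set. -/
lemma convexOn_congr {s : Set ℝ} {f h : ℝ → ℝ} (hf : ConvexOn ℝ s f)
    (he : ∀ x ∈ s, f x = h x) : ConvexOn ℝ s h := by
  refine ⟨hf.1, fun x hx y hy a b ha hb hab => ?_⟩
  have hm := hf.1 hx hy ha hb hab
  rw [← he _ hm, ← he _ hx, ← he _ hy]
  exact hf.2 hx hy ha hb hab

/-- Convexity of `(s - m + q/s) e^{λ r}`-type functions, given nonnegativity of the
associated second-derivative polynomial. -/
lemma aux_convex (q m lam : ℝ) (hq : 0 ≤ q) (hlam : 0 < lam)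
    (hP : ∀ s : ℝ, 1 ≤ s →
      0 ≤ 2*q + 2*lam*(s^3 - q*s) + lam^2*(s^4 - m*s^3 + q*s^2)) :
    ConvexOn ℝ (Set.Ici 0)
      (fun r : ℝ => ((r+1) - m + q*(r+1)⁻¹) * Real.exp (lam * r)) := by
  set F : ℝ → ℝ := fun r => ((r+1) - m + q*(r+1)⁻¹) * Real.exp (lam * r) with hF
  set F1 : ℝ → ℝ := fun r => (1 - q*((r+1)^2)⁻¹) * Real.exp (lam*r) +
      ((r+1) - m + q*(r+1)⁻¹) * (Real.exp (lam*r) * lam) with hF1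
  set F2 : ℝ → ℝ := fun r =>
      ((2*q*(r+1)*(((r+1)^2)^2)⁻¹) * Real.exp (lam*r) +
        (1 - q*((r+1)^2)⁻¹) * (Real.exp (lam*r) * lam)) +
      ((1 - q*((r+1)^2)⁻¹) * (Real.exp (lam*r) * lam) +
        ((r+1) - m + q*(r+1)⁻¹) * (Real.exp (lam*r) * lam * lam)) with hF2
  have hexp : ∀ x : ℝ, HasDerivAt (fun r : ℝ => Real.exp (lam*r))
      (Real.exp (lam*x) * lam) x := by
    intro x
    have h : HasDerivAt (fun r : ℝ => lam * r) lam x := by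
      simpa using (hasDerivAt_id x).const_mul lam
    exact h.exp
  have hphi : ∀ x : ℝ, x ≠ -1 → HasDerivAt (fun r : ℝ => (r+1) - m + q*(r+1)⁻¹)
      (1 - q*((x+1)^2)⁻¹) x := by
    intro x hx
    have hx0 : x + 1 ≠ 0 := fun h => hx (by linarith)
    have h1 : HasDerivAt (fun r : ℝ => r + 1) 1 x := (hasDerivAt_id x).add_const 1
    have hinv : HasDerivAt (fun r : ℝ => (r+1)⁻¹) (-1/(x+1)^2) x := h1.inv hx0
    have := (h1.sub_const m).add (hinv.const_mul q)
    refine this.congr_deriv ?_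
    ring
  have hd1 : ∀ x : ℝ, x ≠ -1 → HasDerivAt F (F1 x) x := by
    intro x hx
    exact (hphi x hx).mul (hexp x)
  have hA : ∀ x : ℝ, x ≠ -1 → HasDerivAt (fun r : ℝ => 1 - q*((r+1)^2)⁻¹)
      (2*q*(x+1)*(((x+1)^2)^2)⁻¹) x := by
    intro x hx
    have hx0 : x + 1 ≠ 0 := fun h => hx (by linarith)
    have hx2 : (x+1)^2 ≠ 0 := pow_ne_zero 2 hx0
    have h1 : HasDerivAt (fun r : ℝ => r + 1) 1 x := (hasDerivAt_id x).add_const 1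
    have hpow : HasDerivAt (fun r : ℝ => (r+1)^2) (2*(x+1)) x := by
      simpa using h1.fun_pow 2
    have hinv2 : HasDerivAt (fun r : ℝ => ((r+1)^2)⁻¹) (-(2*(x+1))/((x+1)^2)^2) x :=
      hpow.inv hx2
    have := (hinv2.const_mul q).const_sub 1
    refine this.congr_deriv ?_
    ring
  have hd2 : ∀ x : ℝ, x ≠ -1 → HasDerivAt F1 (F2 x) x := by
    intro x hx
    exact ((hA x hx).mul (hexp x)).add ((hphi x hx).mul ((hexp x).mul_const lam))
  have hderiv_eq : ∀ x : ℝ, x ≠ -1 → deriv F x = F1 x := fun x hx => (hd1 x hx).deriv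
  have hne : ∀ x : ℝ, x ∈ Set.Ici (0:ℝ) → x ≠ -1 := by
    intro x hx h
    simp only [Set.mem_Ici] at hx
    linarith
  have hIoi : interior (Set.Ici (0:ℝ)) = Set.Ioi 0 := interior_Ici
  refine convexOn_of_deriv2_nonneg (convex_Ici 0) ?_ ?_ ?_ ?_
  · intro x hx
    exact ((hd1 x (hne x hx)).differentiableAt.continuousAt).continuousWithinAt
  · rw [hIoi]
    intro x hx
    exact (hd1 x (hne x (Set.mem_Ici.2 (le_of_lt hx)))).differentiableAt.differentiableWithinAt
  · rw [hIoi]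
    intro x hx
    have hxx : x ≠ -1 := hne x (Set.mem_Ici.2 (le_of_lt hx))
    have heq : deriv F =ᶠ[nhds x] F1 := by
      filter_upwards [Ioi_mem_nhds (show (-1:ℝ) < x by
        have := Set.mem_Ioi.1 hx; linarith)] with y hy
      exact hderiv_eq y (by intro h; rw [h] at hy; exact absurd hy (by simp))
    exact ((hd2 x hxx).differentiableAt.congr_of_eventuallyEq heq).differentiableWithinAt
  · rw [hIoi]
    intro x hx
    have hx0 : (0:ℝ) < x := Set.mem_Ioi.1 hx
    have hxx : x ≠ -1 := by intro h; rw [h] at hx0; linarith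
    have heq : deriv F =ᶠ[nhds x] F1 := by
      filter_upwards [Ioi_mem_nhds (show (-1:ℝ) < x by linarith)] with y hy
      exact hderiv_eq y (by intro h; rw [h] at hy; exact absurd hy (by simp))
    have h2 : deriv^[2] F x = F2 x := by
      have e1 : deriv (deriv F) x = deriv F1 x := heq.deriv_eq
      have e2 : deriv F1 x = F2 x := (hd2 x hxx).deriv
      show deriv (deriv F) x = F2 x
      rw [e1, e2]
    rw [h2]
    have hx1 : x + 1 ≠ 0 := by positivity
    have hPs := hP (x+1) (by linarith)
    have hval : F2 x = (2*q + 2*lam*((x+1)^3 - q*(x+1)) +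
        lam^2*((x+1)^4 - m*(x+1)^3 + q*(x+1)^2)) / (x+1)^3 * Real.exp (lam*x) := by
      simp only [hF2]
      field_simp
      ring
    rw [hval]
    have h3 : (0:ℝ) < (x+1)^3 := by positivity
    exact mul_nonneg (div_nonneg hPs h3.le) (Real.exp_pos _).le

/-- The function `g_k(r) = (2(k+2)(k+1−r) + r(r+1)) / ((r+1)(k+1)(k+1)^{(k+1−r)/k})`,
where `(k+1)^{(k+1−r)/k}` is a real power (`Real.rpow`). -/
noncomputable def g (k : ℕ) (r : ℝ) : ℝ :=
  (2 * ((k : ℝ) + 2) * ((k : ℝ) + 1 - r) + r * (r + 1)) /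
    ((r + 1) * ((k : ℝ) + 1) * ((k : ℝ) + 1) ^ (((k : ℝ) + 1 - r) / (k : ℝ)))

/-- For every integer `k ≥ 1`, the function `g_k` is convex on `[0,∞)`
and satisfies `g_k(1) = 1` and `g_k(k+1) = 1`; consequently `g_k(r) ≤ 1` for every
`r ∈ [1, k+1]`. -/
theorem stmt16 (k : ℕ) (hk : 1 ≤ k) :
    ConvexOn ℝ (Set.Ici (0 : ℝ)) (g k) ∧
    g k 1 = 1 ∧
    g k ((k : ℝ) + 1) = 1 ∧
    ∀ r ∈ Set.Icc (1 : ℝ) ((k : ℝ) + 1), g k r ≤ 1 := by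
  have hK1 : (1:ℝ) ≤ (k:ℝ) := by exact_mod_cast hk
  set K : ℝ := (k:ℝ) with hKdef
  have hK0 : (0:ℝ) < K := by linarith
  have ha : (0:ℝ) < K + 1 := by linarith
  set L : ℝ := Real.log (K+1) with hLdef
  have hL0 : 0 < L := Real.log_pos (by linarith)
  set lam : ℝ := L / K with hlamdef
  have hlam0 : 0 < lam := div_pos hL0 hK0
  set q : ℝ := 2*(K+2)^2 with hqdef
  set m : ℝ := 2*K+5 with hmdef
  set C : ℝ := ((K+1)*Real.exp (lam*(K+1)))⁻¹ with hCdef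
  have hgval : ∀ r : ℝ, 0 ≤ r →
      g k r = C * (((r+1) - m + q*(r+1)⁻¹) * Real.exp (lam*r)) := by
    intro r hr
    have hr1 : (0:ℝ) < r + 1 := by linarith
    show (2*(K+2)*(K+1-r) + r*(r+1)) / ((r+1)*(K+1)*(K+1) ^ ((K+1-r)/K)) = _
    rw [Real.rpow_def_of_pos ha]
    have hsplit : Real.exp (L * ((K+1-r)/K)) = Real.exp (lam*(K+1)) / Real.exp (lam * r) := by
      rw [eq_div_iff (Real.exp_ne_zero _), ← Real.exp_add]
      congr 1
      have hKne : K ≠ 0 := ne_of_gt hK0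
      rw [hlamdef]
      field_simp
      ring
    rw [hsplit]
    rw [hCdef, hmdef, hqdef]
    have hE1 : Real.exp (lam*(K+1)) ≠ 0 := Real.exp_ne_zero _
    have hE2 : Real.exp (lam*r) ≠ 0 := Real.exp_ne_zero _
    field_simp
    ring
  have hPkey : ∀ s : ℝ, 1 ≤ s →
      0 ≤ 2*q + 2*lam*(s^3 - q*s) + lam^2*(s^4 - m*s^3 + q*s^2) := by
    intro s hs
    have hlam2 : lam ≤ 2 := by
      rw [hlamdef, div_le_iff₀ hK0]
      have := Real.log_le_sub_one_of_pos ha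
      rw [← hLdef] at this
      linarith
    have h49 : 2 ≤ (4*K+9)*lam := by
      have hlog2 : Real.log 2 ≤ L := by
        rw [hLdef]
        apply (Real.log_le_log_iff (by norm_num) (by linarith)).2
        linarith
      have h2 : (0.6931471803:ℝ) < Real.log 2 := Real.log_two_gt_d9
      have hh : 4*L ≤ (4*K+9)*lam := by
        rw [hlamdef]
        rw [show (4*K+9)*(L/K) = (4*K+9)*L/K by ring, le_div_iff₀ hK0]
        nlinarith [hL0.le]
      linarith
    have h2l : (0:ℝ) ≤ 2 - lam := by linarith
    have h49' : (0:ℝ) ≤ (4*K+9)*lam - 2 := by linarith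
    rw [hqdef, hmdef]
    nlinarith [mul_nonneg (sq_nonneg (K+2)) (sq_nonneg (lam*s-2)),
      sq_nonneg (s*((2*K+5)*lam-2-2*lam*s)),
      mul_nonneg (mul_nonneg (sq_nonneg s) h2l) h49']
  have hconvF := aux_convex q m lam (by positivity) hlam0 hPkey
  have hC : 0 < C := by positivity
  have hconvCF : ConvexOn ℝ (Set.Ici 0)
      (fun r : ℝ => C * (((r+1) - m + q*(r+1)⁻¹) * Real.exp (lam*r))) := by
    have := hconvF.smul hC.le
    simpa [smul_eq_mul] using this
  have hconvg : ConvexOn ℝ (Set.Ici 0) (g k) :=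
    convexOn_congr hconvCF (fun x hx => (hgval x hx).symm)
  have hg1 : g k 1 = 1 := by
    show (2*(K+2)*(K+1-1) + 1*(1+1)) / ((1+1)*(K+1)*(K+1) ^ ((K+1-1)/K)) = 1
    have h1 : (K+1-1)/K = 1 := by field_simp; ring
    rw [h1, Real.rpow_one, div_eq_one_iff_eq (by positivity)]
    ring
  have hg2 : g k (K+1) = 1 := by
    show (2*(K+2)*(K+1-(K+1)) + (K+1)*((K+1)+1)) / (((K+1)+1)*(K+1)*(K+1) ^ ((K+1-(K+1))/K)) = 1
    have h0 : (K+1-(K+1))/K = 0 := by simp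
    rw [h0, Real.rpow_zero, div_eq_one_iff_eq (by positivity)]
    ring
  refine ⟨hconvg, hg1, hg2, ?_⟩
  intro r hr
  obtain ⟨hr1, hr2⟩ := hr
  set t : ℝ := (K+1-r)/K with htdef
  have ht0 : 0 ≤ t := div_nonneg (by linarith) hK0.le
  have ht1 : 0 ≤ 1 - t := by
    rw [sub_nonneg, htdef, div_le_one hK0]
    linarith
  have hmem1 : (1:ℝ) ∈ Set.Ici (0:ℝ) := by norm_num
  have hmem2 : K+1 ∈ Set.Ici (0:ℝ) := Set.mem_Ici.2 (by linarith)
  have hcomb := hconvg.2 hmem1 hmem2 ht0 ht1 (by ring)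
  simp only [smul_eq_mul] at hcomb
  have hx : t * (1:ℝ) + (1-t) * (K+1) = r := by
    rw [htdef]
    field_simp
    ring
  rw [hx, hg1, hg2] at hcomb
  linarith
end
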